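/- Let s0 = λ1 λ2 (λ1 − λ2). Then: for every x ∈ ℝ² with λ0(x) = 0, ∇s0(x) · n0 = 3(c_{1,0} − c_{2,0}) λ1(x) λ2(x) + c_{2,0} λ1(x) − c_{1,0} λ2(x); for every x ∈ ℝ² with λ1(x) = 0, ∇s0(x) · n1 = −c_{1,1} λ2(x)²; and for every x ∈ ℝ² with λ2(x) = 0, ∇s0(x) · n2 = c_{2,2} λ1(x)². -/

import Mathlib

noncomputable section

open Matrix MeasureTheory

abbrev Vec2 : Type := Fin 2 → ℝ

/-- Euclidean dot product on `ℝ²`. -/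
def dot2 (a b : Vec2) : ℝ := a 0 * b 0 + a 1 * b 1

/-- Partial derivative of `f` in the `i`-th coordinate direction. -/
def pd (i : Fin 2) (f : Vec2 → ℝ) (x : Vec2) : ℝ := fderiv ℝ f x (Pi.single i 1)

/-- The matrix `a bᵀ`. -/
def outer (a b : Vec2) : Matrix (Fin 2) (Fin 2) ℝ := fun i j => a i * b j

/-- `sym(a ⊗ b) = (a bᵀ + b aᵀ)/2`. -/
def symOuter (a b : Vec2) : Matrix (Fin 2) (Fin 2) ℝ := (1 / 2 : ℝ) • (outer a b + outer b a)

/-- The Airy operator (rotated Hessian)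
`J(f) = [[∂²f/∂x₂², −∂²f/∂x₁∂x₂], [−∂²f/∂x₁∂x₂, ∂²f/∂x₁²]]`. -/
def airy (f : Vec2 → ℝ) (x : Vec2) : Matrix (Fin 2) (Fin 2) ℝ :=
  !![pd 1 (pd 1 f) x, -(pd 0 (pd 1 f) x); -(pd 0 (pd 1 f) x), pd 0 (pd 0 f) x]

/-- `f` is the evaluation function of a real polynomial in two variables of total degree ≤ m. -/
def IsPolyDeg (m : ℕ) (f : Vec2 → ℝ) : Prop :=
  ∃ P : MvPolynomial (Fin 2) ℝ, P.totalDegree ≤ m ∧ ∀ x, f x = MvPolynomial.eval x P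

/-- `f` is the evaluation function of a real polynomial in two variables. -/
def IsPolyFun (f : Vec2 → ℝ) : Prop :=
  ∃ P : MvPolynomial (Fin 2) ℝ, ∀ x, f x = MvPolynomial.eval x P

/-- `λᵢᴿ = λᵢ − min(λ₀, λ₁, λ₂)`: hat function of vertex `vᵢ` on the barycentric refinement. -/
def lamR (lam : Fin 3 → Vec2 → ℝ) (i : Fin 3) (x : Vec2) : ℝ :=
  lam i x - min (lam 0 x) (min (lam 1 x) (lam 2 x))

/-- `x ∈ Ωⱼ`: the region where `λⱼ` is the strict minimum of the barycentric coordinates. -/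
def inReg (lam : Fin 3 → Vec2 → ℝ) (j : Fin 3) (x : Vec2) : Prop :=
  ∀ i : Fin 3, i ≠ j → lam j x < lam i x

/-- The branch formula of `ψᵢ` on `Ω_{i+2}`. -/
def psiA (lam : Fin 3 → Vec2 → ℝ) (tc : Fin 3 → Vec2) (k : ℕ) (i : Fin 3) (x : Vec2) :
    Matrix (Fin 2) (Fin 2) ℝ :=
  (2 * (lam i x - lam (i + 2) x) ^ k) • symOuter (tc i) (tc (i + 1)) -
    ((k : ℝ) * (lam i x - lam (i + 2) x) ^ (k - 1) * (lam (i + 1) x - lam (i + 2) x)) •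
      outer (tc (i + 1)) (tc (i + 1))

/-- The branch formula of `ψᵢ` on `Ω_{i+1}`. -/
def psiB (lam : Fin 3 → Vec2 → ℝ) (tc : Fin 3 → Vec2) (k : ℕ) (i : Fin 3) (x : Vec2) :
    Matrix (Fin 2) (Fin 2) ℝ :=
  -((2 * (lam i x - lam (i + 1) x) ^ k) • symOuter (tc i) (tc (i + 2))) +
    ((k : ℝ) * (lam i x - lam (i + 1) x) ^ (k - 1) * (lam (i + 2) x - lam (i + 1) x)) •
      outer (tc (i + 2)) (tc (i + 2))

open Classical in
/-- The piecewise enrichment stress `ψᵢ`. -/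
def psiFun (lam : Fin 3 → Vec2 → ℝ) (tc : Fin 3 → Vec2) (k : ℕ) (i : Fin 3) (x : Vec2) :
    Matrix (Fin 2) (Fin 2) ℝ :=
  if inReg lam (i + 2) x then psiA lam tc k i x
  else if inReg lam (i + 1) x then psiB lam tc k i x
  else 0

/-- The `Ωⱼ`-branch polynomial formula of `ψᵢ` (value used on the closed edge `eⱼ`). -/
def psiEdge (lam : Fin 3 → Vec2 → ℝ) (tc : Fin 3 → Vec2) (k : ℕ) (i j : Fin 3) (x : Vec2) :
    Matrix (Fin 2) (Fin 2) ℝ :=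
  if j = i + 2 then psiA lam tc k i x
  else if j = i + 1 then psiB lam tc k i x
  else 0

/-- The Airy potential `vᵢ = (4|T|²/(9(k+1))) (λᵢᴿ)^{k+1} (λ_{i+2} − λ_{i+1})`. -/
def vEnrich (lam : Fin 3 → Vec2 → ℝ) (area : ℝ) (k : ℕ) (i : Fin 3) (x : Vec2) : ℝ :=
  4 * area ^ 2 / (9 * (k + 1)) * (lamR lam i x) ^ (k + 1) * (lam (i + 2) x - lam (i + 1) x)

/-- `v_{i,i+1} = (C_T/(k+1))[(λᵢᴿ)^{k+1} − λᵢ^{k+1}](λ_{i+2} − λ_{i+1}) − C_T λᵢ^k λ_{i+1} λ_{i+2}`. -/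
def vE1 (lam : Fin 3 → Vec2 → ℝ) (area : ℝ) (k : ℕ) (i : Fin 3) (x : Vec2) : ℝ :=
  4 * area ^ 2 / 9 / (k + 1) * ((lamR lam i x) ^ (k + 1) - (lam i x) ^ (k + 1)) *
      (lam (i + 2) x - lam (i + 1) x) -
    4 * area ^ 2 / 9 * (lam i x) ^ k * lam (i + 1) x * lam (i + 2) x

/-- `v_{i,i+2} = (C_T/(k+1))[(λᵢᴿ)^{k+1} − λᵢ^{k+1}](λ_{i+2} − λ_{i+1}) + C_T λᵢ^k λ_{i+1} λ_{i+2}`. -/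
def vE2 (lam : Fin 3 → Vec2 → ℝ) (area : ℝ) (k : ℕ) (i : Fin 3) (x : Vec2) : ℝ :=
  4 * area ^ 2 / 9 / (k + 1) * ((lamR lam i x) ^ (k + 1) - (lam i x) ^ (k + 1)) *
      (lam (i + 2) x - lam (i + 1) x) +
    4 * area ^ 2 / 9 * (lam i x) ^ k * lam (i + 1) x * lam (i + 2) x

/-- `wᵢ = (1/(4 C_T c_{i,i})) (v_{i+1,i} − v_{i+2,i})`, with `k = 1`. -/
def wFun (lam : Fin 3 → Vec2 → ℝ) (g : Fin 3 → Vec2) (n : Fin 3 → Vec2) (area : ℝ)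
    (i : Fin 3) (x : Vec2) : ℝ :=
  1 / (4 * (4 * area ^ 2 / 9) * dot2 (g i) (n i)) *
    (vE2 lam area 1 (i + 1) x - vE1 lam area 1 (i + 2) x)

/-- `sᵢ = λ_{i+1} λ_{i+2} (λ_{i+1} − λ_{i+2})`. -/
def sFun (lam : Fin 3 → Vec2 → ℝ) (i : Fin 3) (x : Vec2) : ℝ :=
  lam (i + 1) x * lam (i + 2) x * (lam (i + 1) x - lam (i + 2) x)

/-- `uᵢ = sᵢ − 3(c_{i+1,i} − c_{i+2,i}) wᵢ − c_{i+1,i+1} w_{i+1} + c_{i+2,i+2} w_{i+2}`. -/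
def uFun (lam : Fin 3 → Vec2 → ℝ) (g : Fin 3 → Vec2) (n : Fin 3 → Vec2) (area : ℝ)
    (i : Fin 3) (x : Vec2) : ℝ :=
  sFun lam i x - 3 * (dot2 (g (i + 1)) (n i) - dot2 (g (i + 2)) (n i)) * wFun lam g n area i x -
    dot2 (g (i + 1)) (n (i + 1)) * wFun lam g n area (i + 1) x +
    dot2 (g (i + 2)) (n (i + 2)) * wFun lam g n area (i + 2) x

/-- The closed triangle `T = conv{v₀, v₁, v₂}`. -/
def Tset (v : Fin 3 → Vec2) : Set Vec2 := convexHull ℝ {v 0, v 1, v 2}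

/-- The closed edge `eⱼ` of `T` opposite the vertex `vⱼ`. -/
def edgeSeg (v : Fin 3 → Vec2) (j : Fin 3) : Set Vec2 := segment ℝ (v (j + 1)) (v (j + 2))

/-- `det(v₁ − v₀, v₂ − v₀)`. -/
def detT (v : Fin 3 → Vec2) : ℝ :=
  (v 1 0 - v 0 0) * (v 2 1 - v 0 1) - (v 1 1 - v 0 1) * (v 2 0 - v 0 0)

/-- The constant linear map `n ↦ dot2 (g i) n` as a continuous linear map. -/
def dotCLM (a : Vec2) : Vec2 →L[ℝ] ℝ :=
  a 0 • ContinuousLinearMap.proj 0 + a 1 • ContinuousLinearMap.proj 1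

lemma dotCLM_apply (a m : Vec2) : dotCLM a m = dot2 a m := by
  simp [dotCLM, dot2]

lemma hasFDerivAt_lam (lam : Fin 3 → Vec2 → ℝ) (g : Fin 3 → Vec2) (cst : Fin 3 → ℝ)
    (hlam : ∀ i x, lam i x = dot2 (g i) x + cst i) (i : Fin 3) (x : Vec2) :
    HasFDerivAt (lam i) (dotCLM (g i)) x := by
  have hl : lam i = fun y => g i 0 * y 0 + g i 1 * y 1 + cst i := by
    funext y; rw [hlam]; simp [dot2]
  rw [hl]
  have h0 : HasFDerivAt (fun y : Vec2 => y 0)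
      (ContinuousLinearMap.proj (R := ℝ) (φ := fun _ : Fin 2 => ℝ) 0) x :=
    hasFDerivAt_apply 0 x
  have h1 : HasFDerivAt (fun y : Vec2 => y 1)
      (ContinuousLinearMap.proj (R := ℝ) (φ := fun _ : Fin 2 => ℝ) 1) x :=
    hasFDerivAt_apply 1 x
  exact ((h0.const_mul (g i 0)).add (h1.const_mul (g i 1))).add_const (cst i)

lemma fderiv_sFun0 (lam : Fin 3 → Vec2 → ℝ) (g : Fin 3 → Vec2) (cst : Fin 3 → ℝ)
    (hlam : ∀ i x, lam i x = dot2 (g i) x + cst i) (x m : Vec2) :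
    fderiv ℝ (sFun lam 0) x m =
      (dot2 (g 1) m * lam 2 x + lam 1 x * dot2 (g 2) m) * (lam 1 x - lam 2 x) +
        lam 1 x * lam 2 x * (dot2 (g 1) m - dot2 (g 2) m) := by
  have h1 := hasFDerivAt_lam lam g cst hlam 1 x
  have h2 := hasFDerivAt_lam lam g cst hlam 2 x
  have hs : sFun lam 0 = fun y => lam 1 y * lam 2 y * (lam 1 y - lam 2 y) := by
    funext y
    have e1 : (0 : Fin 3) + 1 = 1 := rfl
    have e2 : (0 : Fin 3) + 2 = 2 := rfl
    simp [sFun, e1, e2]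
  have hD : HasFDerivAt (fun y => lam 1 y * lam 2 y * (lam 1 y - lam 2 y)) _ x :=
    ((h1.mul h2).mul (h1.sub h2))
  rw [hs, hD.fderiv]
  simp only [ContinuousLinearMap.add_apply, ContinuousLinearMap.smul_apply,
    ContinuousLinearMap.coe_sub', Pi.sub_apply, Pi.mul_apply, dotCLM_apply, smul_eq_mul]
  ring

/-- normal derivatives of `s₀ = λ₁λ₂(λ₁ − λ₂)` on the three edge lines. -/
theorem s0_normal_derivatives
    (v : Fin 3 → Vec2) (hv : AffineIndependent ℝ v)
    (lam : Fin 3 → Vec2 → ℝ) (g : Fin 3 → Vec2) (cst : Fin 3 → ℝ)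
    (hlam : ∀ i x, lam i x = dot2 (g i) x + cst i)
    (hdelta : ∀ i j, lam i (v j) = if i = j then 1 else 0)
    (n : Fin 3 → Vec2) (hn1 : ∀ j, dot2 (n j) (n j) = 1)
    (hn2 : ∀ j, dot2 (n j) (v (j + 2) - v (j + 1)) = 0) :
    (∀ x, lam 0 x = 0 →
      fderiv ℝ (sFun lam 0) x (n 0)
        = 3 * (dot2 (g 1) (n 0) - dot2 (g 2) (n 0)) * (lam 1 x * lam 2 x) +
            (dot2 (g 2) (n 0) * lam 1 x - dot2 (g 1) (n 0) * lam 2 x)) ∧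
    (∀ x, lam 1 x = 0 →
      fderiv ℝ (sFun lam 0) x (n 1) = -(dot2 (g 1) (n 1)) * (lam 2 x) ^ 2) ∧
    (∀ x, lam 2 x = 0 →
      fderiv ℝ (sFun lam 0) x (n 2) = dot2 (g 2) (n 2) * (lam 1 x) ^ 2) := by
  have E : ∀ i j : Fin 3, g i 0 * v j 0 + g i 1 * v j 1 + cst i
      = if i = j then 1 else 0 := by
    intro i j
    have h := hdelta i j
    rw [hlam] at h
    simpa [dot2] using h
  have E00 : g 0 0 * v 0 0 + g 0 1 * v 0 1 + cst 0 = 1 := by simpa using E 0 0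
  have E01 : g 0 0 * v 1 0 + g 0 1 * v 1 1 + cst 0 = 0 := by simpa using E 0 1
  have E02 : g 0 0 * v 2 0 + g 0 1 * v 2 1 + cst 0 = 0 := by simpa using E 0 2
  have E10 : g 1 0 * v 0 0 + g 1 1 * v 0 1 + cst 1 = 0 := by simpa using E 1 0
  have E11 : g 1 0 * v 1 0 + g 1 1 * v 1 1 + cst 1 = 1 := by simpa using E 1 1
  have E12 : g 1 0 * v 2 0 + g 1 1 * v 2 1 + cst 1 = 0 := by simpa using E 1 2
  have E20 : g 2 0 * v 0 0 + g 2 1 * v 0 1 + cst 2 = 0 := by simpa using E 2 0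
  have E21 : g 2 0 * v 1 0 + g 2 1 * v 1 1 + cst 2 = 0 := by simpa using E 2 1
  have E22 : g 2 0 * v 2 0 + g 2 1 * v 2 1 + cst 2 = 1 := by simpa using E 2 2
  have A11 : g 1 0 * (v 1 0 - v 0 0) + g 1 1 * (v 1 1 - v 0 1) = 1 := by
    linear_combination E11 - E10
  have A12 : g 1 0 * (v 2 0 - v 0 0) + g 1 1 * (v 2 1 - v 0 1) = 0 := by
    linear_combination E12 - E10
  have A21 : g 2 0 * (v 1 0 - v 0 0) + g 2 1 * (v 1 1 - v 0 1) = 0 := by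
    linear_combination E21 - E20
  have A22 : g 2 0 * (v 2 0 - v 0 0) + g 2 1 * (v 2 1 - v 0 1) = 1 := by
    linear_combination E22 - E20
  have hGd1 : (g 0 0 + g 1 0 + g 2 0) * (v 1 0 - v 0 0)
      + (g 0 1 + g 1 1 + g 2 1) * (v 1 1 - v 0 1) = 0 := by
    linear_combination E01 + E11 + E21 - E00 - E10 - E20
  have hGd2 : (g 0 0 + g 1 0 + g 2 0) * (v 2 0 - v 0 0)
      + (g 0 1 + g 1 1 + g 2 1) * (v 2 1 - v 0 1) = 0 := by
    linear_combination E02 + E12 + E22 - E00 - E10 - E20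
  have hdet : ((v 1 0 - v 0 0) * (v 2 1 - v 0 1) - (v 1 1 - v 0 1) * (v 2 0 - v 0 0))
      * (g 1 0 * g 2 1 - g 1 1 * g 2 0) = 1 := by
    linear_combination (g 2 0 * (v 2 0 - v 0 0) + g 2 1 * (v 2 1 - v 0 1)) * A11 + A22
      - (g 2 0 * (v 1 0 - v 0 0) + g 2 1 * (v 1 1 - v 0 1)) * A12
  have hdetne : (v 1 0 - v 0 0) * (v 2 1 - v 0 1) - (v 1 1 - v 0 1) * (v 2 0 - v 0 0) ≠ 0 := by
    intro h; rw [h] at hdet; simp at hdet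
  have hG0 : g 0 0 + g 1 0 + g 2 0 = 0 := by
    have key : (g 0 0 + g 1 0 + g 2 0)
        * ((v 1 0 - v 0 0) * (v 2 1 - v 0 1) - (v 1 1 - v 0 1) * (v 2 0 - v 0 0)) = 0 := by
      linear_combination (v 2 1 - v 0 1) * hGd1 - (v 1 1 - v 0 1) * hGd2
    exact (mul_eq_zero.mp key).resolve_right hdetne
  have hG1 : g 0 1 + g 1 1 + g 2 1 = 0 := by
    have key : (g 0 1 + g 1 1 + g 2 1)
        * ((v 1 0 - v 0 0) * (v 2 1 - v 0 1) - (v 1 1 - v 0 1) * (v 2 0 - v 0 0)) = 0 := by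
      linear_combination (v 1 0 - v 0 0) * hGd2 - (v 2 0 - v 0 0) * hGd1
    exact (mul_eq_zero.mp key).resolve_right hdetne
  have hCsum : cst 0 + cst 1 + cst 2 = 1 := by
    linear_combination E00 + E10 + E20 - v 0 0 * hG0 - v 0 1 * hG1
  have hsum : ∀ x, lam 0 x + lam 1 x + lam 2 x = 1 := by
    intro x
    rw [hlam 0 x, hlam 1 x, hlam 2 x]
    simp only [dot2]
    linear_combination x 0 * hG0 + x 1 * hG1 + hCsum
  refine ⟨fun x hx => ?_, fun x hx => ?_, fun x hx => ?_⟩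
  · rw [fderiv_sFun0 lam g cst hlam]
    have hab : lam 1 x + lam 2 x = 1 := by have := hsum x; linarith
    linear_combination (dot2 (g 2) (n 0) * lam 1 x - dot2 (g 1) (n 0) * lam 2 x) * hab
  · rw [fderiv_sFun0 lam g cst hlam, hx]; ring
  · rw [fderiv_sFun0 lam g cst hlam, hx]; ring
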